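/- Let H be a complex Hilbert space, M and N closed subspaces of H, and P, Q the orthogonal projections of H onto M and N respectively. Then M + N is a closed subspace of H if and only if ‖PQ − P_{M∩N}‖ < 1, where P_{M∩N} is the orthogonal projection of H onto M ∩ N and ‖·‖ is the operator norm. -/

import Mathlib

section Aux

variable {H : Type*} [NormedAddCommGroup H] [InnerProductSpace ℂ H]

local notation "⟪" x ", " y "⟫" => @inner ℂ _ _ x y

private lemma sq_le_imp {a b : ℝ} (ha : 0 ≤ a) (hb : 0 ≤ b) (h : a ^ 2 ≤ b ^ 2) : a ≤ b := by
  nlinarith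

private lemma aux_fix {K : Submodule ℂ H} {P : H →L[ℂ] H}
    (h : ∀ x : H, P x ∈ K ∧ x - P x ∈ Kᗮ) {x : H} (hx : x ∈ K) : P x = x := by
  have h1 : x - P x ∈ K := K.sub_mem hx (h x).1
  have h2 : ⟪x - P x, x - P x⟫ = 0 :=
    Submodule.inner_right_of_mem_orthogonal h1 (h x).2
  have h3 : x - P x = 0 := inner_self_eq_zero.mp h2
  exact (sub_eq_zero.mp h3).symm

private lemma aux_ann {K : Submodule ℂ H} {P : H →L[ℂ] H}
    (h : ∀ x : H, P x ∈ K ∧ x - P x ∈ Kᗮ) {x : H} (hx : x ∈ Kᗮ) : P x = 0 := by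
  have h1 : P x ∈ Kᗮ := by
    have : P x = x - (x - P x) := by abel
    rw [this]
    exact Kᗮ.sub_mem hx (h x).2
  exact inner_self_eq_zero.mp (Submodule.inner_right_of_mem_orthogonal (h x).1 h1)

private lemma aux_sa {K : Submodule ℂ H} {P : H →L[ℂ] H}
    (h : ∀ x : H, P x ∈ K ∧ x - P x ∈ Kᗮ) (x y : H) : ⟪P x, y⟫ = ⟪x, P y⟫ := by
  have h1 : ⟪P x, y - P y⟫ = 0 :=
    Submodule.inner_right_of_mem_orthogonal (h x).1 (h y).2
  have h2 : ⟪x - P x, P y⟫ = 0 :=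
    Submodule.inner_left_of_mem_orthogonal (h y).1 (h x).2
  have e1 : ⟪P x, y⟫ = ⟪P x, P y⟫ + ⟪P x, y - P y⟫ := by
    rw [← inner_add_right]
    congr 1
    abel
  have e2 : ⟪x, P y⟫ = ⟪P x, P y⟫ + ⟪x - P x, P y⟫ := by
    rw [← inner_add_left]
    congr 1
    abel
  rw [e1, e2, h1, h2]

private lemma aux_pyth {K : Submodule ℂ H} {P : H →L[ℂ] H}
    (h : ∀ x : H, P x ∈ K ∧ x - P x ∈ Kᗮ) (x : H) :
    ‖x‖ ^ 2 = ‖P x‖ ^ 2 + ‖x - P x‖ ^ 2 := by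
  have h0 : ⟪P x, x - P x⟫ = 0 :=
    Submodule.inner_right_of_mem_orthogonal (h x).1 (h x).2
  have := norm_add_sq_eq_norm_sq_add_norm_sq_of_inner_eq_zero (P x) (x - P x) h0
  rw [add_sub_cancel] at this
  simp only [pow_two]
  linarith

private lemma aux_norm {K : Submodule ℂ H} {P : H →L[ℂ] H}
    (h : ∀ x : H, P x ∈ K ∧ x - P x ∈ Kᗮ) (x : H) : ‖P x‖ ≤ ‖x‖ := by
  have := aux_pyth h x
  nlinarith [norm_nonneg (x - P x), norm_nonneg x, norm_nonneg (P x)]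

private lemma aux_norm' {K : Submodule ℂ H} {P : H →L[ℂ] H}
    (h : ∀ x : H, P x ∈ K ∧ x - P x ∈ Kᗮ) (x : H) : ‖x - P x‖ ≤ ‖x‖ := by
  have := aux_pyth h x
  nlinarith [norm_nonneg (x - P x), norm_nonneg x, norm_nonneg (P x)]

end Aux

local notation "⟪" x ", " y "⟫" => @inner ℂ _ _ x y

set_option maxHeartbeats 1000000 in
/-- Friedrichs angle criterion: for closed subspaces `M, N` of a Hilbert space with
orthogonal projections `P, Q`, and `R` the orthogonal projection onto `M ∩ N`,
`M + N` is closed iff `‖PQ - R‖ < 1`. -/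
theorem stmt_9 {H : Type*} [NormedAddCommGroup H] [InnerProductSpace ℂ H] [CompleteSpace H]
    (M N : Submodule ℂ H) (hM : IsClosed (M : Set H)) (hN : IsClosed (N : Set H))
    (P Q R : H →L[ℂ] H)
    (hP : ∀ x : H, P x ∈ M ∧ x - P x ∈ Mᗮ)
    (hQ : ∀ x : H, Q x ∈ N ∧ x - Q x ∈ Nᗮ)
    (hR : ∀ x : H, R x ∈ M ⊓ N ∧ x - R x ∈ (M ⊓ N)ᗮ) :
    IsClosed ((M ⊔ N : Submodule ℂ H) : Set H) ↔ ‖P * Q - R‖ < 1 := by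
  classical
  set A : Submodule ℂ H := M ⊓ N with hA
  set M' : Submodule ℂ H := M ⊓ Aᗮ with hM'def
  set N' : Submodule ℂ H := N ⊓ Aᗮ with hN'def
  set T : H →L[ℂ] H := P * Q - R with hTdef
  -- closedness / completeness
  have hAoc : IsClosed ((Aᗮ : Submodule ℂ H) : Set H) := Submodule.isClosed_orthogonal A
  have hAc : IsClosed ((A : Submodule ℂ H) : Set H) := by
    rw [hA, Submodule.coe_inf]; exact hM.inter hN
  have hM'c : IsClosed ((M' : Submodule ℂ H) : Set H) := by
    rw [hM'def, Submodule.coe_inf]; exact hM.inter hAoc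
  have hN'c : IsClosed ((N' : Submodule ℂ H) : Set H) := by
    rw [hN'def, Submodule.coe_inf]; exact hN.inter hAoc
  haveI : CompleteSpace A := hAc.completeSpace_coe
  haveI : CompleteSpace M' := hM'c.completeSpace_coe
  haveI : CompleteSpace N' := hN'c.completeSpace_coe
  -- projection facts
  have saP := aux_sa hP
  have saQ := aux_sa hQ
  have saR := aux_sa hR
  have annR : ∀ x ∈ Aᗮ, R x = 0 := fun x hx => aux_ann hR hx
  have hRP : ∀ x : H, R (P x) = R x := by
    intro x
    apply ext_inner_right ℂ
    intro v
    rw [saR (P x) v, saP x (R v), aux_fix hP (Submodule.mem_inf.mp (hR v).1).1]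
    exact (saR x v).symm
  have hRQ : ∀ x : H, R (Q x) = R x := by
    intro x
    apply ext_inner_right ℂ
    intro v
    rw [saR (Q x) v, saQ x (R v), aux_fix hQ (Submodule.mem_inf.mp (hR v).1).2]
    exact (saR x v).symm
  have hp'mem : ∀ x : H, P x - R x ∈ M' := by
    intro x
    refine Submodule.mem_inf.mpr ⟨M.sub_mem (hP x).1 (Submodule.mem_inf.mp (hR x).1).1, ?_⟩
    have h2 := (hR (P x)).2
    rwa [hRP x] at h2
  have hq'mem : ∀ x : H, Q x - R x ∈ N' := by
    intro x
    refine Submodule.mem_inf.mpr ⟨N.sub_mem (hQ x).1 (Submodule.mem_inf.mp (hR x).1).2, ?_⟩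
    have h2 := (hR (Q x)).2
    rwa [hRQ x] at h2
  have hp'fix : ∀ x ∈ M', P x - R x = x := by
    intro x hx
    rcases Submodule.mem_inf.mp hx with ⟨h1, h2⟩
    rw [aux_fix hP h1, annR x h2, sub_zero]
  have hq'fix : ∀ x ∈ N', Q x - R x = x := by
    intro x hx
    rcases Submodule.mem_inf.mp hx with ⟨h1, h2⟩
    rw [aux_fix hQ h1, annR x h2, sub_zero]
  have hTapp : ∀ x : H, T x = P (Q x) - R x := by
    intro x
    rw [hTdef]
    simp [ContinuousLinearMap.sub_apply, ContinuousLinearMap.mul_apply]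
  have hTeq : ∀ x : H, T x = P (Q x - R x) - R (Q x - R x) := by
    intro x
    rw [map_sub, map_sub, aux_fix hP (Submodule.mem_inf.mp (hR x).1).1, hRQ x,
      aux_fix hR (hR x).1, hTapp]
    abel
  have hTmem : ∀ x : H, T x ∈ M' := by
    intro x
    rw [hTeq x]
    exact hp'mem (Q x - R x)
  have hq'norm : ∀ x : H, ‖Q x - R x‖ ≤ ‖x‖ := by
    intro x
    have h1 : Q x - R x = Q (x - R x) := by
      rw [map_sub, aux_fix hQ (Submodule.mem_inf.mp (hR x).1).2]
    rw [h1]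
    exact (aux_norm hQ _).trans (aux_norm' hR x)
  have key : ∀ x ∈ M', ∀ y ∈ N', ⟪x, y⟫ = ⟪x, T y⟫ := by
    intro x hx y hy
    rw [hTeq y, hq'fix y hy, inner_sub_right, ← saP, ← saR, ← inner_sub_left, hp'fix x hx]
  have hBB : ∀ x : H, ‖T x‖ ^ 2 = RCLike.re ⟪Q x - R x, T x⟫ := by
    intro x
    have h1 : ⟪T x, T x⟫ = ⟪Q x - R x, T x⟫ := by
      nth_rewrite 1 [hTeq x]
      rw [inner_sub_left, saP, saR, ← inner_sub_right, hp'fix (T x) (hTmem x)]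
    rw [← inner_self_eq_norm_sq (𝕜 := ℂ) (T x), h1]
  constructor
  · -- closed → norm < 1
    intro hcl
    obtain ⟨C, hC0, hC⟩ : ∃ C : ℝ, 0 ≤ C ∧ ∀ x ∈ M', ∀ y ∈ N', ‖x‖ ≤ C * ‖x + y‖ := by
      have hKc : IsClosed (((M ⊔ N) ⊓ Aᗮ : Submodule ℂ H) : Set H) := by
        rw [Submodule.coe_inf]; exact hcl.inter hAoc
      haveI : CompleteSpace ((M ⊔ N) ⊓ Aᗮ : Submodule ℂ H) := hKc.completeSpace_coe
      set S' : (↥M' × ↥N') →L[ℂ] H :=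
        M'.subtypeL.comp (ContinuousLinearMap.fst ℂ M' N') +
          N'.subtypeL.comp (ContinuousLinearMap.snd ℂ M' N') with hS'def
      have hS'app : ∀ v : ↥M' × ↥N', S' v = (v.1 : H) + (v.2 : H) := fun v => rfl
      have hmemK : ∀ v : ↥M' × ↥N', S' v ∈ (M ⊔ N) ⊓ Aᗮ := by
        intro v
        rw [hS'app]
        refine Submodule.mem_inf.mpr ⟨?_, ?_⟩
        · exact Submodule.add_mem _
            (Submodule.mem_sup_left (Submodule.mem_inf.mp v.1.2).1)
            (Submodule.mem_sup_right (Submodule.mem_inf.mp v.2.2).1)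
        · exact Submodule.add_mem _ (Submodule.mem_inf.mp v.1.2).2
            (Submodule.mem_inf.mp v.2.2).2
      set S'' : (↥M' × ↥N') →L[ℂ] ((M ⊔ N) ⊓ Aᗮ : Submodule ℂ H) :=
        S'.codRestrict _ hmemK with hS''def
      have hker : S''.ker = ⊥ := by
        rw [LinearMap.ker_eq_bot']
        rintro ⟨x, y⟩ hm
        have h0 : (x : H) + (y : H) = 0 := congrArg Subtype.val hm
        have hxN : (x : H) ∈ N := by
          have hxy : (x : H) = -(y : H) := eq_neg_of_add_eq_zero_left h0
          rw [hxy]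
          exact N.neg_mem (Submodule.mem_inf.mp y.2).1
        have hxA : (x : H) ∈ A :=
          Submodule.mem_inf.mpr ⟨(Submodule.mem_inf.mp x.2).1, hxN⟩
        have hx0 : (x : H) = 0 := inner_self_eq_zero.mp
          (Submodule.inner_right_of_mem_orthogonal hxA (Submodule.mem_inf.mp x.2).2)
        have hy0 : (y : H) = 0 := by rwa [hx0, zero_add] at h0
        exact Prod.ext (Subtype.ext hx0) (Subtype.ext hy0)
      have hsur : S''.range = ⊤ := by
        rw [LinearMap.range_eq_top]
        rintro ⟨z, hz⟩
        rcases Submodule.mem_inf.mp hz with ⟨hz1, hz2⟩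
        rcases Submodule.mem_sup.mp hz1 with ⟨m, hm, n, hn, rfl⟩
        have hmm : m - R m ∈ M' :=
          Submodule.mem_inf.mpr ⟨M.sub_mem hm (Submodule.mem_inf.mp (hR m).1).1, (hR m).2⟩
        have hnn : n - R n ∈ N' :=
          Submodule.mem_inf.mpr ⟨N.sub_mem hn (Submodule.mem_inf.mp (hR n).1).2, (hR n).2⟩
        refine ⟨(⟨m - R m, hmm⟩, ⟨n - R n, hnn⟩), ?_⟩
        apply Subtype.ext
        show (m - R m) + (n - R n) = m + n
        have hz0 : R (m + n) = 0 := annR _ hz2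
        rw [map_add] at hz0
        have hstep : m - R m + (n - R n) = m + n - (R m + R n) := by abel
        rw [hstep, hz0, sub_zero]
      set e := ContinuousLinearEquiv.ofBijective S'' hker hsur with hedef
      refine ⟨‖(e.symm : ((M ⊔ N) ⊓ Aᗮ : Submodule ℂ H) →L[ℂ] (↥M' × ↥N'))‖,
        norm_nonneg _, ?_⟩
      intro x hx y hy
      set v : ↥M' × ↥N' := (⟨x, hx⟩, ⟨y, hy⟩) with hvdef
      have h1 : e.symm (e v) = v := e.symm_apply_apply v
      have h2 : ‖(e.symm : ((M ⊔ N) ⊓ Aᗮ : Submodule ℂ H) →L[ℂ] (↥M' × ↥N')) (e v)‖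
          ≤ ‖(e.symm : ((M ⊔ N) ⊓ Aᗮ : Submodule ℂ H) →L[ℂ] (↥M' × ↥N'))‖ * ‖e v‖ :=
        (e.symm : ((M ⊔ N) ⊓ Aᗮ : Submodule ℂ H) →L[ℂ] (↥M' × ↥N')).le_opNorm (e v)
      rw [ContinuousLinearEquiv.coe_coe, h1] at h2
      have h3 : ‖e v‖ = ‖x + y‖ := by
        have he : e v = S'' v := rfl
        rw [he]
        rfl
      have h4 : ‖x‖ ≤ ‖v‖ := by
        rw [Prod.norm_def]
        exact le_max_left _ _
      rw [h3] at h2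
      exact h4.trans h2
    -- final bound
    set d : ℝ := Real.sqrt (C ^ 2 / (1 + C ^ 2)) with hddef
    have hdnn : 0 ≤ d := Real.sqrt_nonneg _
    have hd2 : d ^ 2 = C ^ 2 / (1 + C ^ 2) := Real.sq_sqrt (by positivity)
    have hd1 : d < 1 := by
      have hlt : d ^ 2 < 1 := by
        rw [hd2, div_lt_one (by positivity)]
        linarith
      nlinarith
    have hTle : ∀ x : H, ‖T x‖ ≤ d * ‖x‖ := by
      intro x
      have hb := hBB x
      have hbM : T x ∈ M' := hTmem x
      have haN : Q x - R x ∈ N' := hq'mem x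
      have h1 : ‖T x‖ ≤ C * ‖T x + -(Q x - R x)‖ :=
        hC (T x) hbM (-(Q x - R x)) (N'.neg_mem haN)
      have h2 : ‖T x + -(Q x - R x)‖ ^ 2 = ‖Q x - R x‖ ^ 2 - ‖T x‖ ^ 2 := by
        have e2 := @norm_sub_sq ℂ _ _ _ _ (T x) (Q x - R x)
        have e3 : RCLike.re ⟪T x, Q x - R x⟫ = ‖T x‖ ^ 2 := by
          rw [inner_re_symm]
          exact hb.symm
        rw [← sub_eq_add_neg, e2, e3]
        ring
      have h3 : ‖Q x - R x‖ ≤ ‖x‖ := hq'norm x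
      apply sq_le_imp (norm_nonneg _) (by positivity)
      rw [mul_pow, hd2, div_mul_eq_mul_div, le_div_iff₀ (by positivity)]
      have h4 : ‖T x‖ ^ 2 ≤ C ^ 2 * (‖Q x - R x‖ ^ 2 - ‖T x‖ ^ 2) := by
        nlinarith [mul_self_le_mul_self (norm_nonneg (T x)) h1, h2]
      have h5 : ‖Q x - R x‖ ^ 2 ≤ ‖x‖ ^ 2 := by
        nlinarith [mul_self_le_mul_self (norm_nonneg (Q x - R x)) h3]
      nlinarith [h4, h5, sq_nonneg C, mul_le_mul_of_nonneg_left h5 (sq_nonneg C)]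
    have hfin : ‖T‖ ≤ d := T.opNorm_le_bound hdnn hTle
    linarith
  · -- norm < 1 → closed
    intro hc
    set c : ℝ := ‖T‖ with hc0
    have hc1 : 0 ≤ c := norm_nonneg T
    have hδ : (0 : ℝ) < 1 - c := by linarith
    have lem1 : ∀ x ∈ M', ∀ y ∈ N',
        (1 - c) * (‖x‖ ^ 2 + ‖y‖ ^ 2) ≤ ‖x + y‖ ^ 2 := by
      intro x hx y hy
      have e := @norm_add_sq ℂ _ _ _ _ x y
      have h2 : ‖⟪x, y⟫‖ ≤ c * (‖x‖ * ‖y‖) := by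
        rw [key x hx y hy]
        calc ‖⟪x, T y⟫‖ ≤ ‖x‖ * ‖T y‖ := norm_inner_le_norm x (T y)
          _ ≤ ‖x‖ * (c * ‖y‖) := by
              have := T.le_opNorm y
              have hx0 : (0:ℝ) ≤ ‖x‖ := norm_nonneg x
              nlinarith
          _ = c * (‖x‖ * ‖y‖) := by ring
      have h3 : |RCLike.re ⟪x, y⟫| ≤ ‖⟪x, y⟫‖ := RCLike.abs_re_le_norm _
      have h4 : -(c * (‖x‖ * ‖y‖)) ≤ RCLike.re ⟪x, y⟫ := (abs_le.mp (h3.trans h2)).1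
      nlinarith [h4, mul_nonneg hc1 (sq_nonneg (‖x‖ - ‖y‖)), e]
    obtain ⟨S, hSapp⟩ : ∃ S : (↥A × (↥M' × ↥N')) →L[ℂ] H,
        ∀ v : ↥A × (↥M' × ↥N'), S v = (v.1 : H) + ((v.2.1 : H) + (v.2.2 : H)) :=
      ⟨A.subtypeL.comp (ContinuousLinearMap.fst ℂ ↥A (↥M' × ↥N')) +
        ((M'.subtypeL.comp (ContinuousLinearMap.fst ℂ ↥M' ↥N')).comp
          (ContinuousLinearMap.snd ℂ ↥A (↥M' × ↥N')) +
        (N'.subtypeL.comp (ContinuousLinearMap.snd ℂ ↥M' ↥N')).comp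
          (ContinuousLinearMap.snd ℂ ↥A (↥M' × ↥N'))), fun v => rfl⟩
    set K0 : ℝ := Real.sqrt (3 / (1 - c)) with hK0def
    have gbound : ∀ a ∈ A, ∀ x ∈ M', ∀ y ∈ N',
        max ‖a‖ (max ‖x‖ ‖y‖) ≤ K0 * ‖a + (x + y)‖ := by
      intro a ha x hx y hy
      have horth : ⟪a, x + y⟫ = 0 :=
        Submodule.inner_right_of_mem_orthogonal ha
          (Aᗮ.add_mem (Submodule.mem_inf.mp hx).2 (Submodule.mem_inf.mp hy).2)
      have hpy : ‖a + (x + y)‖ ^ 2 = ‖a‖ ^ 2 + ‖x + y‖ ^ 2 := by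
        have := norm_add_sq_eq_norm_sq_add_norm_sq_of_inner_eq_zero _ _ horth
        simp only [pow_two]
        linarith
      have f2 := lem1 x hx y hy
      have f3 : max ‖a‖ (max ‖x‖ ‖y‖) ≤ ‖a‖ + ‖x‖ + ‖y‖ := by
        apply max_le
        · nlinarith [norm_nonneg x, norm_nonneg y, norm_nonneg a]
        · apply max_le <;> nlinarith [norm_nonneg x, norm_nonneg y, norm_nonneg a]
      apply sq_le_imp ((norm_nonneg a).trans (le_max_left _ _)) (by positivity)
      rw [mul_pow, hK0def, Real.sq_sqrt (by positivity), div_mul_eq_mul_div,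
        le_div_iff₀ hδ]
      have f4 : (max ‖a‖ (max ‖x‖ ‖y‖)) ^ 2 ≤ (‖a‖ + ‖x‖ + ‖y‖) ^ 2 := by
        nlinarith [f3, (norm_nonneg a).trans (le_max_left ‖a‖ (max ‖x‖ ‖y‖))]
      have f5 : (‖a‖ + ‖x‖ + ‖y‖) ^ 2 ≤ 3 * (‖a‖ ^ 2 + ‖x‖ ^ 2 + ‖y‖ ^ 2) := by
        nlinarith [sq_nonneg (‖a‖ - ‖x‖), sq_nonneg (‖a‖ - ‖y‖), sq_nonneg (‖x‖ - ‖y‖)]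
      nlinarith [hpy, f2, mul_le_mul_of_nonneg_left (f4.trans f5) hδ.le,
        mul_nonneg hc1 (sq_nonneg ‖a‖)]
    have hbound : ∀ v : ↥A × (↥M' × ↥N'), ‖v‖ ≤ K0 * ‖S v‖ := by
      rintro ⟨a, x, y⟩
      simp only [hSapp, Prod.norm_def, Submodule.coe_norm]
      exact gbound (a : H) a.2 (x : H) x.2 (y : H) y.2
    have hanti : AntilipschitzWith (Real.toNNReal K0) S :=
      S.antilipschitz_of_bound (K := Real.toNNReal K0) (fun v => by
        rw [Real.coe_toNNReal K0 (Real.sqrt_nonneg _)]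
        exact hbound v)
    have hclrange : IsClosed (Set.range S) := hanti.isClosed_range S.uniformContinuous
    have hrange : Set.range S = ((M ⊔ N : Submodule ℂ H) : Set H) := by
      ext z
      constructor
      · rintro ⟨⟨a, x, y⟩, rfl⟩
        rw [hSapp]
        have hmem : (a : H) + ((x : H) + (y : H)) ∈ M ⊔ N := by
          refine Submodule.add_mem _ ?_ (Submodule.add_mem _ ?_ ?_)
          · exact Submodule.mem_sup_left (Submodule.mem_inf.mp a.2).1
          · exact Submodule.mem_sup_left (Submodule.mem_inf.mp x.2).1
          · exact Submodule.mem_sup_right (Submodule.mem_inf.mp y.2).1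
        exact hmem
      · intro hz
        rcases Submodule.mem_sup.mp (SetLike.mem_coe.mp hz) with ⟨m, hm, n, hn, rfl⟩
        have hmm : m - R m ∈ M' :=
          Submodule.mem_inf.mpr ⟨M.sub_mem hm (Submodule.mem_inf.mp (hR m).1).1, (hR m).2⟩
        have hnn : n - R n ∈ N' :=
          Submodule.mem_inf.mpr ⟨N.sub_mem hn (Submodule.mem_inf.mp (hR n).1).2, (hR n).2⟩
        refine ⟨(⟨R m + R n, A.add_mem (hR m).1 (hR n).1⟩, ⟨m - R m, hmm⟩, ⟨n - R n, hnn⟩), ?_⟩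
        rw [hSapp]
        show (R m + R n) + ((m - R m) + (n - R n)) = m + n
        abel
    rw [← hrange]
    exact hclrange
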